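/- Let $\ell>0$, let $\eta:[0,\ell]\to\mathbb{R}$ be continuous with $\eta>0$, let $f:[0,\ell]\to\mathbb{R}$ be bounded and measurable, and let $\bar t\in(0,\ell)$ satisfy $\int_0^{\bar t}\frac{dr}{\eta(r)}=\int_{\bar t}^{\ell}\frac{dr}{\eta(r)}$. Define $s:[0,\ell]\to\mathbb{R}$ by $s(t)=1$ for $t<\bar t$ and $s(t)=-1$ for $t>\bar t$. Suppose $v:[0,\ell]\to\mathbb{R}$ is continuous and satisfies $\int_0^{\ell}v(t)\,s(t)\,\psi'(t)\,dt=\int_0^{\ell}f(t)\,\psi(t)\,dt$ for every Lipschitz function $\psi:[0,\ell]\to\mathbb{R}$ with $\psi(0)=\psi(\ell)=0$. Then $v(\bar t)=0$, $v(t)=\int_t^{\bar t}f(r)\,dr$ for all $t\in[0,\bar t]$, and $v(t)=\int_{\bar t}^{t}f(r)\,dr$ for all $t\in[\bar t,\ell]$. -/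

import Mathlib

open MeasureTheory Set Filter

private lemma eq_at_closure_pt {f g : ℝ → ℝ} {s : Set ℝ} {p : ℝ}
    (hf : ContinuousWithinAt f s p) (hg : ContinuousWithinAt g s p)
    (h : Set.EqOn f g s) (hp : p ∈ closure s) : f p = g p := by
  have hne : (nhdsWithin p s).NeBot := mem_closure_iff_nhdsWithin_neBot.mp hp
  have hfg : f =ᶠ[nhdsWithin p s] g :=
    eventually_nhdsWithin_of_forall (fun x hx => h hx)
  exact tendsto_nhds_unique (hf.congr' hfg) hg

theorem sandpile_uniqueness_single_edge (ℓ : ℝ) (hℓ : 0 < ℓ)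
    (η f : ℝ → ℝ)
    (hη : ContinuousOn η (Set.Icc 0 ℓ)) (hηpos : ∀ t ∈ Set.Icc 0 ℓ, 0 < η t)
    (hfmeas : Measurable f)
    (hfbd : ∃ C : ℝ, ∀ t ∈ Set.Icc 0 ℓ, |f t| ≤ C)
    (tbar : ℝ) (htbar : tbar ∈ Set.Ioo 0 ℓ)
    (hbal : (∫ r in (0:ℝ)..tbar, 1 / η r) = ∫ r in tbar..ℓ, 1 / η r)
    (s : ℝ → ℝ)
    (hs : ∀ t : ℝ, (t < tbar → s t = 1) ∧ (tbar < t → s t = -1))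
    (v : ℝ → ℝ) (hv : ContinuousOn v (Set.Icc 0 ℓ))
    (hweak : ∀ ψ : ℝ → ℝ, (∃ K : NNReal, LipschitzOnWith K ψ (Set.Icc 0 ℓ)) →
      ψ 0 = 0 → ψ ℓ = 0 →
      ∫ t in Set.Ioo 0 ℓ, v t * s t * deriv ψ t = ∫ t in Set.Ioo 0 ℓ, f t * ψ t) :
    v tbar = 0 ∧
    (∀ t ∈ Set.Icc 0 tbar, v t = ∫ r in t..tbar, f r) ∧
    (∀ t ∈ Set.Icc tbar ℓ, v t = ∫ r in tbar..t, f r) := by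
  obtain ⟨h0t, htl⟩ := htbar
  obtain ⟨C₀, hC₀⟩ := hfbd
  set C : ℝ := max C₀ 0 with hCdef
  have hC : ∀ t ∈ Set.Icc 0 ℓ, |f t| ≤ C := fun t ht => (hC₀ t ht).trans (le_max_left _ _)
  set S : ℝ → ℝ := fun x => if x < tbar then (1:ℝ) else -1 with hSdef
  have hSmeas : Measurable S := Measurable.ite measurableSet_Iio measurable_const measurable_const
  have hSbd : ∀ x, |S x| ≤ 1 := by
    intro x; simp only [hSdef]; split <;> simp
  have hsS : ∀ x, x ≠ tbar → s x = S x := by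
    intro x hx
    rcases lt_or_gt_of_ne hx with h | h
    · rw [(hs x).1 h, hSdef]; simp [h]
    · rw [(hs x).2 h, hSdef]; simp [not_lt.2 h.le]
  -- integrability of f on Icc 0 ℓ
  have hfIcc : IntegrableOn f (Set.Icc 0 ℓ) := by
    apply Measure.integrableOn_of_bounded (M := C) (by simp)
      hfmeas.aestronglyMeasurable
    exact (ae_restrict_iff' measurableSet_Icc).2 (ae_of_all _ (fun x hx => by
      simpa [Real.norm_eq_abs] using hC x hx))
  have hfIoo : IntegrableOn f (Set.Ioo 0 ℓ) := hfIcc.mono_set Set.Ioo_subset_Icc_self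
  -- v bounded and measurable
  obtain ⟨M, hM⟩ : ∃ M, ∀ x ∈ Set.Icc 0 ℓ, ‖v x‖ ≤ M :=
    isCompact_Icc.exists_bound_of_continuousOn hv
  have hvS_int : IntegrableOn (fun x => v x * S x) (Set.Ioo 0 ℓ) := by
    refine ⟨((hv.mono Set.Ioo_subset_Icc_self).aestronglyMeasurable measurableSet_Ioo).mul
        (hSmeas.aestronglyMeasurable.restrict), ?_⟩
    apply HasFiniteIntegral.restrict_of_bounded (C := M) measure_Ioo_lt_top
    · refine (ae_restrict_iff' measurableSet_Ioo).2 (ae_of_all _ fun x hx => ?_)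
      have hMx := hM x (Set.Ioo_subset_Icc_self hx)
      calc ‖v x * S x‖ = ‖v x‖ * |S x| := by rw [norm_mul, Real.norm_eq_abs (S x)]
        _ ≤ M * 1 := mul_le_mul hMx (hSbd x) (abs_nonneg _) ((norm_nonneg _).trans hMx)
        _ = M := mul_one M
  have hvS_meas : AEStronglyMeasurable (fun x => v x * S x) (volume.restrict (Set.Ioo 0 ℓ)) :=
    hvS_int.aestronglyMeasurable
  -- integrability of f x * min x t₀ and f x * x
  have hfmin_int : ∀ t₀ ∈ Set.Icc 0 ℓ, IntegrableOn (fun x => f x * min x t₀) (Set.Ioo 0 ℓ) := by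
    intro t₀ ht₀
    apply Measure.integrableOn_of_bounded (M := C * ℓ) (by simp)
    · exact (hfmeas.mul (measurable_id'.min measurable_const)).aestronglyMeasurable
    · refine (ae_restrict_iff' measurableSet_Ioo).2 (ae_of_all _ fun x hx => ?_)
      have h1 : |f x| ≤ C := hC x (Set.Ioo_subset_Icc_self hx)
      have h2 : |min x t₀| ≤ ℓ := by
        rw [abs_le]
        constructor
        · have := le_min hx.1.le ht₀.1; linarith
        · exact (min_le_left _ _).trans hx.2.le
      calc ‖f x * min x t₀‖ = |f x| * |min x t₀| := by rw [Real.norm_eq_abs, abs_mul]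
        _ ≤ C * ℓ := mul_le_mul h1 h2 (abs_nonneg _) ((abs_nonneg _).trans h1)
  have hfx_int : IntegrableOn (fun x => f x * x) (Set.Ioo 0 ℓ) := by
    apply Measure.integrableOn_of_bounded (M := C * ℓ) (by simp)
    · exact (hfmeas.mul measurable_id').aestronglyMeasurable
    · refine (ae_restrict_iff' measurableSet_Ioo).2 (ae_of_all _ fun x hx => ?_)
      have h1 : |f x| ≤ C := hC x (Set.Ioo_subset_Icc_self hx)
      have h2 : |x| ≤ ℓ := by rw [abs_le]; exact ⟨by linarith [hx.1], hx.2.le⟩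
      calc ‖f x * x‖ = |f x| * |x| := by rw [Real.norm_eq_abs, abs_mul]
        _ ≤ C * ℓ := mul_le_mul h1 h2 (abs_nonneg _) ((abs_nonneg _).trans h1)
  -- definitions
  set G : ℝ → ℝ := fun u => ∫ x in Set.Ioo 0 u, v x * S x with hGdef
  set Φ : ℝ → ℝ := fun u => ∫ x in Set.Ioo 0 ℓ, f x * min x u with hPdef
  set A : ℝ := ∫ x in Set.Ioo 0 ℓ, f x * x with hAdef
  set Fl : ℝ → ℝ := fun u => ∫ r in u..ℓ, f r with hFldef
  -- Step 1 : main identity from the weak formulation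
  have step1 : ∀ t₀ ∈ Set.Icc 0 ℓ, G t₀ = t₀ / ℓ * G ℓ + (Φ t₀ - t₀ / ℓ * A) := by
    intro t₀ ht₀
    set ψ : ℝ → ℝ := fun x => min x t₀ - t₀ / ℓ * x with hψdef
    have hlip : ∃ K : NNReal, LipschitzOnWith K ψ (Set.Icc 0 ℓ) := by
      refine ⟨1 + ‖t₀ / ℓ‖₊, ?_⟩
      have h1 : LipschitzWith 1 (fun x : ℝ => min x t₀) := LipschitzWith.id.min_const t₀
      have h2 : LipschitzWith ‖t₀ / ℓ‖₊ (fun x : ℝ => t₀ / ℓ * x) := by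
        simpa [smul_eq_mul] using lipschitzWith_smul (β := ℝ) (t₀ / ℓ)
      exact (h1.sub h2).lipschitzOnWith
    have hψ0 : ψ 0 = 0 := by simp [hψdef, min_eq_left ht₀.1]
    have hψℓ : ψ ℓ = 0 := by
      simp only [hψdef, min_eq_right ht₀.2]
      field_simp
      ring
    have hW := hweak ψ hlip hψ0 hψℓ
    -- rewrite the left side integrand a.e.
    have hne1 : ∀ᵐ x : ℝ, x ≠ t₀ := by
      have : (volume ({t₀} : Set ℝ)) = 0 := measure_singleton _
      exact compl_mem_ae_iff.2 this
    have hne2 : ∀ᵐ x : ℝ, x ≠ tbar := by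
      have : (volume ({tbar} : Set ℝ)) = 0 := measure_singleton _
      exact compl_mem_ae_iff.2 this
    have hderiv1 : ∀ x : ℝ, x < t₀ → deriv ψ x = 1 - t₀ / ℓ := by
      intro x hx
      have hev : ψ =ᶠ[nhds x] fun y => y - t₀ / ℓ * y := by
        filter_upwards [Iio_mem_nhds hx] with y hy
        simp [hψdef, min_eq_left (le_of_lt (Set.mem_Iio.mp hy))]
      rw [hev.deriv_eq]
      have : HasDerivAt (fun y : ℝ => y - t₀ / ℓ * y) (1 - t₀ / ℓ * 1) x :=
        (hasDerivAt_id x).sub ((hasDerivAt_id x).const_mul (t₀ / ℓ))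
      simpa using this.deriv
    have hderiv2 : ∀ x : ℝ, t₀ < x → deriv ψ x = 0 - t₀ / ℓ := by
      intro x hx
      have hev : ψ =ᶠ[nhds x] fun y => t₀ - t₀ / ℓ * y := by
        filter_upwards [Ioi_mem_nhds hx] with y hy
        simp [hψdef, min_eq_right (le_of_lt (Set.mem_Ioi.mp hy))]
      rw [hev.deriv_eq]
      have : HasDerivAt (fun y : ℝ => t₀ - t₀ / ℓ * y) (0 - t₀ / ℓ * 1) x :=
        (hasDerivAt_const x t₀).sub ((hasDerivAt_id x).const_mul (t₀ / ℓ))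
      simpa using this.deriv
    have hLHS : ∫ x in Set.Ioo 0 ℓ, v x * s x * deriv ψ x
        = ∫ x in Set.Ioo 0 ℓ, v x * S x * ((if x < t₀ then (1:ℝ) else 0) - t₀ / ℓ) := by
      apply setIntegral_congr_ae measurableSet_Ioo
      filter_upwards [hne1, hne2] with x hx1 hx2 _
      rw [hsS x hx2]
      rcases lt_or_gt_of_ne hx1 with h | h
      · rw [hderiv1 x h, if_pos h]
      · rw [hderiv2 x h, if_neg (not_lt.2 h.le)]
    have hsplitL : ∫ x in Set.Ioo 0 ℓ, v x * S x * ((if x < t₀ then (1:ℝ) else 0) - t₀ / ℓ)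
        = G t₀ - t₀ / ℓ * G ℓ := by
      have hind : (fun x => v x * S x * (if x < t₀ then (1:ℝ) else 0))
          = (Set.Iio t₀).indicator (fun x => v x * S x) := by
        ext x; by_cases h : x < t₀ <;> simp [Set.indicator, h]
      have hint1 : IntegrableOn (fun x => v x * S x * (if x < t₀ then (1:ℝ) else 0))
          (Set.Ioo 0 ℓ) := by
        rw [hind]; exact hvS_int.indicator measurableSet_Iio
      have hint2 : IntegrableOn (fun x => t₀ / ℓ * (v x * S x)) (Set.Ioo 0 ℓ) :=
        hvS_int.const_mul _
      have heq : ∀ x : ℝ, v x * S x * ((if x < t₀ then (1:ℝ) else 0) - t₀ / ℓ)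
          = v x * S x * (if x < t₀ then (1:ℝ) else 0) - t₀ / ℓ * (v x * S x) := by
        intro x; ring
      rw [show (fun x => v x * S x * ((if x < t₀ then (1:ℝ) else 0) - t₀ / ℓ))
          = fun x => v x * S x * (if x < t₀ then (1:ℝ) else 0) - t₀ / ℓ * (v x * S x) from
          funext heq] at *
      rw [integral_sub hint1 hint2, integral_const_mul]
      congr 1
      rw [hind, setIntegral_indicator measurableSet_Iio]
      rw [Set.Ioo_inter_Iio, min_eq_right ht₀.2]
    have hRHS : ∫ x in Set.Ioo 0 ℓ, f x * ψ x = Φ t₀ - t₀ / ℓ * A := by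
      have heq : ∀ x : ℝ, f x * ψ x = f x * min x t₀ - t₀ / ℓ * (f x * x) := by
        intro x; simp only [hψdef]; ring
      rw [show (fun x => f x * ψ x) = fun x => f x * min x t₀ - t₀ / ℓ * (f x * x) from
          funext heq]
      rw [integral_sub (hfmin_int t₀ ht₀) (hfx_int.const_mul _), integral_const_mul]
    rw [hLHS, hsplitL, hRHS] at hW
    linarith
  -- Step 2 : derivative identity
  have step2 : ∀ t ∈ Set.Ioo 0 ℓ, t ≠ tbar → v t * S t = Fl t + (G ℓ / ℓ - A / ℓ) := by
    intro t ht hne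
    -- derivative of G at t
    have hint : IntervalIntegrable (fun x => v x * S x) volume 0 t := by
      rw [intervalIntegrable_iff_integrableOn_Ioc_of_le ht.1.le]
      exact hvS_int.mono_set (fun x hx => ⟨hx.1, lt_of_le_of_lt hx.2 ht.2⟩)
    have hmeasAt : StronglyMeasurableAtFilter (fun x => v x * S x) (nhds t) :=
      ⟨Set.Ioo 0 ℓ, Ioo_mem_nhds ht.1 ht.2, hvS_meas⟩
    have hcontAt : ContinuousAt (fun x => v x * S x) t := by
      have hv_at : ContinuousAt v t := hv.continuousAt (Icc_mem_nhds ht.1 ht.2)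
      have hS_at : ContinuousAt S t := by
        rcases lt_or_gt_of_ne hne with h | h
        · have hev : S =ᶠ[nhds t] fun _ => (1:ℝ) := by
            filter_upwards [Iio_mem_nhds h] with y hy; simp [hSdef, Set.mem_Iio.mp hy]
          exact continuousAt_const.congr hev.symm
        · have hev : S =ᶠ[nhds t] fun _ => (-1:ℝ) := by
            filter_upwards [Ioi_mem_nhds h] with y hy; simp [hSdef, not_lt.2 (Set.mem_Ioi.mp hy).le]
          exact continuousAt_const.congr hev.symm
      exact hv_at.mul hS_at
    have hGd : HasDerivAt G (v t * S t) t := by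
      have h1 : HasDerivAt (fun u => ∫ x in (0:ℝ)..u, v x * S x) (v t * S t) t :=
        intervalIntegral.integral_hasDerivAt_right hint hmeasAt hcontAt
      apply h1.congr_of_eventuallyEq
      filter_upwards [Ioi_mem_nhds ht.1] with u hu
      rw [hGdef]
      rw [intervalIntegral.integral_of_le (le_of_lt hu),
        MeasureTheory.integral_Ioc_eq_integral_Ioo]
    -- derivative of Φ at t
    have hPd : HasDerivAt Φ (Fl t) t := by
      have key := hasDerivAt_integral_of_dominated_loc_of_lip
        (μ := volume.restrict (Set.Ioo 0 ℓ))
        (F := fun u x => f x * min x u)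
        (F' := fun x => if t < x then f x else 0)
        (x₀ := t) (bound := fun x => |f x|) (s := Set.univ) Filter.univ_mem
        (Filter.Eventually.of_forall (fun u =>
          (hfmeas.mul (measurable_id'.min measurable_const)).aestronglyMeasurable.restrict))
        (hfmin_int t ⟨ht.1.le, ht.2.le⟩)
        ((Measurable.ite (measurableSet_Ioi (a := t)) hfmeas measurable_const
          ).aestronglyMeasurable.restrict)
        (ae_of_all _ (fun x => by
          have h1 : LipschitzWith 1 (fun u : ℝ => min x u) := LipschitzWith.id.const_min x
          have h2 : LipschitzWith (‖f x‖₊ * 1) (fun u : ℝ => f x * min x u) := by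
            have := (lipschitzWith_smul (β := ℝ) (f x)).comp h1
            simpa [smul_eq_mul, Function.comp_def] using this
          have h3 : (‖f x‖₊ * 1 : NNReal) = Real.nnabs (|f x|) := by
            ext
            simp [Real.norm_eq_abs, abs_abs]
          rw [← h3]
          exact h2.lipschitzOnWith))
        hfIoo.abs
        ?_
      · obtain ⟨-, hD⟩ := key
        have hval : (∫ x in Set.Ioo 0 ℓ, if t < x then f x else 0) = Fl t := by
          have hind : (fun x => if t < x then f x else 0) = (Set.Ioi t).indicator f := by
            ext x; by_cases h : t < x <;> simp [Set.indicator, h]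
          rw [hind, setIntegral_indicator measurableSet_Ioi, Set.Ioo_inter_Ioi,
            max_eq_right ht.1.le]
          show _ = ∫ r in t..ℓ, f r
          rw [intervalIntegral.integral_of_le ht.2.le,
            MeasureTheory.integral_Ioc_eq_integral_Ioo]
        rw [← hval]
        exact hD
      · apply ae_restrict_of_ae
        have hne1 : ∀ᵐ x : ℝ, x ≠ t := by
          have : (volume ({t} : Set ℝ)) = 0 := measure_singleton _
          exact compl_mem_ae_iff.2 this
        filter_upwards [hne1] with x hx
        rcases lt_or_gt_of_ne hx with h | h
        · -- x < t : min x u = x near t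
          rw [if_neg (not_lt.2 h.le)]
          have hc : HasDerivAt (fun _ : ℝ => f x * x) 0 t := hasDerivAt_const t (f x * x)
          apply hc.congr_of_eventuallyEq
          filter_upwards [Ioi_mem_nhds h] with u hu
          rw [min_eq_left (le_of_lt (Set.mem_Ioi.mp hu))]
        · rw [if_pos h]
          have hc : HasDerivAt (fun u : ℝ => f x * u) (f x) t := by
            simpa using (hasDerivAt_id t).const_mul (f x)
          apply hc.congr_of_eventuallyEq
          filter_upwards [Iio_mem_nhds h] with u hu
          rw [min_eq_right (le_of_lt (Set.mem_Iio.mp hu))]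
    -- derivative of RHS
    have hRd : HasDerivAt (fun u => u / ℓ * G ℓ + (Φ u - u / ℓ * A))
        (1 / ℓ * G ℓ + (Fl t - 1 / ℓ * A)) t := by
      have hlin : ∀ b : ℝ, HasDerivAt (fun u : ℝ => u / ℓ * b) (1 / ℓ * b) t := by
        intro b
        simpa using (((hasDerivAt_id t).div_const ℓ).mul_const b)
      exact (hlin (G ℓ)).add (hPd.sub (hlin A))
    have hGd2 : HasDerivAt G (1 / ℓ * G ℓ + (Fl t - 1 / ℓ * A)) t := by
      apply hRd.congr_of_eventuallyEq
      filter_upwards [Icc_mem_nhds ht.1 ht.2] with u hu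
      exact step1 u hu
    have := hGd.unique hGd2
    rw [this]
    field_simp
    ring
  set c : ℝ := G ℓ / ℓ - A / ℓ with hcdef
  -- continuity of Fl on Icc 0 ℓ
  have hFlcont : ContinuousOn Fl (Set.Icc 0 ℓ) := by
    have h := intervalIntegral.continuousOn_primitive_interval_left
      (f := f) (μ := volume) (a := 0) (b := ℓ) (by rwa [Set.uIcc_of_le hℓ.le])
    rwa [Set.uIcc_of_le hℓ.le] at h
  have htbarIcc : tbar ∈ Set.Icc 0 ℓ := ⟨h0t.le, htl.le⟩
  have hsubL : Set.Ioo 0 tbar ⊆ Set.Icc 0 ℓ := fun x hx => ⟨hx.1.le, hx.2.le.trans htl.le⟩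
  have hsubR : Set.Ioo tbar ℓ ⊆ Set.Icc 0 ℓ := fun x hx => ⟨h0t.le.trans hx.1.le, hx.2.le⟩
  have hleft : ∀ t ∈ Set.Ioo 0 tbar, v t = Fl t + c := by
    intro t ht
    have h1 := step2 t ⟨ht.1, ht.2.trans htl⟩ (ne_of_lt ht.2)
    simpa [hSdef, if_pos ht.2] using h1
  have hright : ∀ t ∈ Set.Ioo tbar ℓ, v t = -(Fl t + c) := by
    intro t ht
    have h1 := step2 t ⟨h0t.trans ht.1, ht.2⟩ (ne_of_gt ht.1)
    rw [hSdef] at h1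
    simp only [if_neg (not_lt.2 ht.1.le)] at h1
    linarith
  have hvtbar1 : v tbar = Fl tbar + c := by
    refine eq_at_closure_pt ?_ ?_ hleft ?_
    · exact (hv.continuousWithinAt htbarIcc).mono hsubL
    · exact ((hFlcont.continuousWithinAt htbarIcc).add continuousWithinAt_const).mono hsubL
    · rw [closure_Ioo (ne_of_lt h0t)]; exact ⟨h0t.le, le_refl _⟩
  have hvtbar2 : v tbar = -(Fl tbar + c) := by
    refine eq_at_closure_pt ?_ ?_ hright ?_
    · exact (hv.continuousWithinAt htbarIcc).mono hsubR
    · exact (((hFlcont.continuousWithinAt htbarIcc).add continuousWithinAt_const).neg).mono hsubR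
    · rw [closure_Ioo (ne_of_lt htl)]; exact ⟨le_refl _, htl.le⟩
  have hvt0 : v tbar = 0 := by linarith
  have hcval : c = -Fl tbar := by linarith
  have hII : ∀ a b : ℝ, a ∈ Set.Icc 0 ℓ → b ∈ Set.Icc 0 ℓ → IntervalIntegrable f volume a b :=
    fun a b ha hb => (hfIcc.mono_set (Set.uIcc_subset_Icc ha hb)).intervalIntegrable
  refine ⟨hvt0, ?_, ?_⟩
  · intro t ht
    have htIcc : t ∈ Set.Icc 0 ℓ := ⟨ht.1, ht.2.trans htl.le⟩
    have keyIoo : ∀ u ∈ Set.Ioo 0 tbar, v u = Fl u - Fl tbar := by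
      intro u hu; have := hleft u hu; rw [hcval] at this; linarith
    have key : v t = Fl t - Fl tbar := by
      rcases eq_or_lt_of_le ht.1 with h0 | h0
      · rw [← h0]
        refine eq_at_closure_pt (g := fun u => Fl u - Fl tbar) ?_ ?_ keyIoo ?_
        · exact (hv.continuousWithinAt ⟨le_refl _, hℓ.le⟩).mono hsubL
        · exact ((hFlcont.continuousWithinAt ⟨le_refl _, hℓ.le⟩).sub
            continuousWithinAt_const).mono hsubL
        · rw [closure_Ioo (ne_of_lt h0t)]; exact ⟨le_refl _, h0t.le⟩
      rcases eq_or_lt_of_le ht.2 with h1 | h1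
      · rw [h1, hvt0]; ring_nf
      · exact keyIoo t ⟨h0, h1⟩
    have h2 : Fl t - Fl tbar = ∫ r in t..tbar, f r := by
      have := intervalIntegral.integral_add_adjacent_intervals
        (hII t tbar htIcc htbarIcc) (hII tbar ℓ htbarIcc ⟨hℓ.le, le_refl _⟩)
      simp only [hFldef]
      linarith
    rw [key, h2]
  · intro t ht
    have htIcc : t ∈ Set.Icc 0 ℓ := ⟨h0t.le.trans ht.1, ht.2⟩
    have keyIoo : ∀ u ∈ Set.Ioo tbar ℓ, v u = Fl tbar - Fl u := by
      intro u hu; have := hright u hu; rw [hcval] at this; linarith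
    have key : v t = Fl tbar - Fl t := by
      rcases eq_or_lt_of_le ht.2 with h1 | h1
      · rw [h1]
        refine eq_at_closure_pt (g := fun u => Fl tbar - Fl u) ?_ ?_ keyIoo ?_
        · exact (hv.continuousWithinAt ⟨hℓ.le, le_refl _⟩).mono hsubR
        · exact (continuousWithinAt_const.sub
            (hFlcont.continuousWithinAt ⟨hℓ.le, le_refl _⟩)).mono hsubR
        · rw [closure_Ioo (ne_of_lt htl)]; exact ⟨htl.le, le_refl _⟩
      rcases eq_or_lt_of_le ht.1 with h0 | h0
      · rw [← h0, hvt0]; ring_nf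
      · exact keyIoo t ⟨h0, h1⟩
    have h2 : Fl tbar - Fl t = ∫ r in tbar..t, f r := by
      have := intervalIntegral.integral_add_adjacent_intervals
        (hII tbar t htbarIcc htIcc) (hII t ℓ htIcc ⟨hℓ.le, le_refl _⟩)
      simp only [hFldef]
      linarith
    rw [key, h2]
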